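/- (Equation (2.23): recursive structure of SDMMSA) Let m ≥ 1 and consider data (Ȳ_1,n_1),…,(Ȳ_{m+1},n_{m+1}). Let μ̂_{j,m} denote the SDMMSA estimates computed from the first m data points. Then for every i ∈ [1,m+1], the SDMMSA estimate from all m+1 points equals the SDMMSA estimate computed from the modified data in which the first m values are replaced by their m-point estimates: μ̂_{i,m+1}(Ȳ_1,…,Ȳ_m,Ȳ_{m+1}) = μ̂_{i,m+1}(μ̂_{1,m},…,μ̂_{m,m},Ȳ_{m+1}) (with the same weights n_1,…,n_{m+1}). -/
import Mathlib


open Finset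

noncomputable section SDMMSA

/-- Pooled weight `n_{i,j} = ∑_{h=i}^j n_h`. -/
def pooledWeight (n : ℕ → ℝ) (i j : ℕ) : ℝ := ∑ h ∈ Finset.Icc i j, n h

/-- Pooled (weighted) mean `Ȳ_{i,j} = (∑_{h=i}^j n_h Y_h) / n_{i,j}`. -/
def pooledMean (n Y : ℕ → ℝ) (i j : ℕ) : ℝ :=
  (∑ h ∈ Finset.Icc i j, n h * Y h) / pooledWeight n i j

/-- The first SDMMSA index for the data `(Y_1,n_1),…,(Y_t,n_t)`:
the smallest `j ∈ [1,t]` at which `Ȳ_{j,t} = max_{1 ≤ j' ≤ t} Ȳ_{j',t}`. -/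
def firstIdx (n Y : ℕ → ℝ) (t : ℕ) : ℕ :=
  sInf {j | 1 ≤ j ∧ j ≤ t ∧ ∀ j', 1 ≤ j' → j' ≤ t → pooledMean n Y j' t ≤ pooledMean n Y j t}

/-- Fuel-based recursion implementing the SDMMSA step-down procedure: on data range `[1,t]`,
every `i ≥ i₁ = firstIdx n Y t` gets the pooled mean `Ȳ_{i₁,t}` of the top block, and for
`i < i₁` we recurse on the data range `[1, i₁ - 1]`.  A fuel of `t` suffices since the
range shrinks strictly at each step. -/
def sdmmsaAux (n Y : ℕ → ℝ) : ℕ → ℕ → ℕ → ℝ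
  | 0, _, _ => 0
  | fuel + 1, t, i =>
      if firstIdx n Y t ≤ i then pooledMean n Y (firstIdx n Y t) t
      else sdmmsaAux n Y fuel (firstIdx n Y t - 1) i

/-- `muhat n Y k i` is the SDMMSA estimate `μ̂_i` computed from the data
`(Y_1,n_1),…,(Y_k,n_k)`. -/
def muhat (n Y : ℕ → ℝ) (k i : ℕ) : ℝ := sdmmsaAux n Y k k i

/-- The SDMMSA indices `i_u` computed from the data `(Y_1,n_1),…,(Y_k,n_k)`:
`sdIdx n Y k 0 = i_0 = k+1` and `i_{u+1}` is the first SDMMSA index of `[1, i_u - 1]`. -/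
def sdIdx (n Y : ℕ → ℝ) (k : ℕ) : ℕ → ℕ
  | 0 => k + 1
  | u + 1 => firstIdx n Y (sdIdx n Y k u - 1)

/-- The number of steps `h` of the SDMMSA: the first `u` with `i_u = 1`. -/
def sdSteps (n Y : ℕ → ℝ) (k : ℕ) : ℕ := sInf {u | sdIdx n Y k u = 1}

end SDMMSA

open Finset

-- sum split
lemma Icc_sum_split (f : ℕ → ℝ) {i k j : ℕ} (h1 : i ≤ k) (h2 : k < j) :
    ∑ h ∈ Finset.Icc i j, f h
      = (∑ h ∈ Finset.Icc i k, f h) + ∑ h ∈ Finset.Icc (k+1) j, f h := by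
  rw [← Finset.Ico_add_one_right_eq_Icc i j, ← Finset.Ico_add_one_right_eq_Icc i k, ← Finset.Ico_add_one_right_eq_Icc (k+1) j]
  rw [Finset.sum_Ico_consecutive f (by omega) (by omega)]

-- arithmetic toolkit
section arith
variable {S1 S2 N1 N2 c u : ℝ}

lemma A1 (hN1 : 0 < N1) (hN2 : 0 < N2) (h1 : S1/N1 ≤ c) (h2 : S2/N2 ≤ c) :
    (S1+S2)/(N1+N2) ≤ c := by
  rw [div_le_iff₀ (by linarith)]
  rw [div_le_iff₀ hN1] at h1; rw [div_le_iff₀ hN2] at h2; nlinarith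

lemma A2 (hN1 : 0 < N1) (hN2 : 0 < N2) (h1 : S1/N1 < c) (h2 : S2/N2 ≤ c) :
    (S1+S2)/(N1+N2) < c := by
  rw [div_lt_iff₀ (by linarith)]
  rw [div_lt_iff₀ hN1] at h1; rw [div_le_iff₀ hN2] at h2; nlinarith

lemma A3 (hN1 : 0 < N1) (hN2 : 0 < N2) (h : (S1+S2)/(N1+N2) < c) (h2 : c ≤ S2/N2) :
    S1/N1 < c := by
  rw [div_lt_iff₀ (by linarith)] at h
  rw [le_div_iff₀ hN2] at h2; rw [div_lt_iff₀ hN1]; nlinarith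

-- conv = c, left < c ⇒ right > c
lemma A3' (hN1 : 0 < N1) (hN2 : 0 < N2) (h : (S1+S2)/(N1+N2) = c) (h1 : S1/N1 < c) :
    c < S2/N2 := by
  rw [div_eq_iff (by positivity : N1+N2 ≠ 0)] at h
  rw [div_lt_iff₀ hN1] at h1; rw [lt_div_iff₀ hN2]; nlinarith

-- conv = w, right ≤ w ⇒ left ≥ w
lemma A6 (hN1 : 0 < N1) (hN2 : 0 < N2) (h : (S1+S2)/(N1+N2) = c) (h2 : S2/N2 ≤ c) :
    c ≤ S1/N1 := by
  rw [div_eq_iff (by positivity : N1+N2 ≠ 0)] at h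
  rw [div_le_iff₀ hN2] at h2; rw [le_div_iff₀ hN1]; nlinarith

-- weight monotonicity
lemma A5 {N1' : ℝ} (hN1' : 0 < N1') (hle : N1' ≤ N1) (hN2 : 0 < N2) (hvu : S2/N2 ≤ u) :
    (N1'*u + S2)/(N1'+N2) ≤ (N1*u + S2)/(N1+N2) := by
  rw [div_le_div_iff₀ (by linarith) (by linarith)]
  rw [div_le_iff₀ hN2] at hvu; nlinarith

lemma A0 (hN1 : 0 < N1) (hN2 : 0 < N2) (h1 : S1/N1 = c) (h2 : S2/N2 = c) :
    (S1+S2)/(N1+N2) = c := by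
  rw [div_eq_iff hN1.ne'] at h1; rw [div_eq_iff hN2.ne'] at h2
  rw [div_eq_iff (by positivity : N1+N2 ≠ 0)]; nlinarith
end arith

section FI
variable (n X : ℕ → ℝ)

lemma firstIdx_spec {t : ℕ} (ht : 1 ≤ t) :
    1 ≤ firstIdx n X t ∧ firstIdx n X t ≤ t ∧
      ∀ j', 1 ≤ j' → j' ≤ t → pooledMean n X j' t ≤ pooledMean n X (firstIdx n X t) t := by
  have hne : {j | 1 ≤ j ∧ j ≤ t ∧ ∀ j', 1 ≤ j' → j' ≤ t →
      pooledMean n X j' t ≤ pooledMean n X j t}.Nonempty := by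
    obtain ⟨b, hb, hmax⟩ := Finset.exists_max_image (Finset.Icc 1 t)
      (fun j => pooledMean n X j t) ⟨1, by simp [ht]⟩
    simp only [Finset.mem_Icc] at hb hmax
    exact ⟨b, hb.1, hb.2, fun j' h1 h2 => hmax j' ⟨h1, h2⟩⟩
  exact Nat.sInf_mem hne

lemma firstIdx_le {t j : ℕ} (h1 : 1 ≤ j) (h2 : j ≤ t)
    (h3 : ∀ j', 1 ≤ j' → j' ≤ t → pooledMean n X j' t ≤ pooledMean n X j t) :
    firstIdx n X t ≤ j := Nat.sInf_le ⟨h1, h2, h3⟩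

lemma pm_lt_of_lt_firstIdx {t j : ℕ} (h1 : 1 ≤ j) (h2 : j ≤ t) (hj : j < firstIdx n X t) :
    pooledMean n X j t < pooledMean n X (firstIdx n X t) t := by
  have ht : 1 ≤ t := le_trans h1 h2
  obtain ⟨_, _, hmax⟩ := firstIdx_spec n X ht
  by_contra hcon
  push_neg at hcon
  have : ∀ j', 1 ≤ j' → j' ≤ t → pooledMean n X j' t ≤ pooledMean n X j t :=
    fun j' a b => le_trans (hmax j' a b) hcon
  exact absurd (firstIdx_le n X h1 h2 this) (by omega)

lemma firstIdx_eq_of {t i₀ : ℕ} (h1 : 1 ≤ i₀) (h2 : i₀ ≤ t)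
    (hup : ∀ j, 1 ≤ j → j ≤ t → pooledMean n X j t ≤ pooledMean n X i₀ t)
    (hdown : ∀ j, 1 ≤ j → j < i₀ → pooledMean n X j t < pooledMean n X i₀ t) :
    firstIdx n X t = i₀ := by
  have hle := firstIdx_le n X h1 h2 hup
  obtain ⟨ha, hb, hmax⟩ := firstIdx_spec n X (le_trans h1 h2)
  rcases lt_or_eq_of_le hle with hlt | he
  · exact absurd (hmax i₀ h1 h2) (not_le.2 (hdown _ ha hlt))
  · exact he

-- fuel independence
lemma sdmmsaAux_fuel : ∀ t f f' i, 1 ≤ i → 1 ≤ t → t ≤ f → t ≤ f' →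
    sdmmsaAux n X f t i = sdmmsaAux n X f' t i := by
  intro t
  induction t using Nat.strong_induction_on with
  | _ t IH =>
    intro f f' i hi ht hf hf'
    obtain ⟨g, rfl⟩ : ∃ g, f = g + 1 := ⟨f - 1, by omega⟩
    obtain ⟨g', rfl⟩ : ∃ g', f' = g' + 1 := ⟨f' - 1, by omega⟩
    show (if firstIdx n X t ≤ i then _ else _) = (if firstIdx n X t ≤ i then _ else _)
    by_cases hc : firstIdx n X t ≤ i
    · rw [if_pos hc, if_pos hc]
    · rw [if_neg hc, if_neg hc]
      obtain ⟨h1, h2, _⟩ := firstIdx_spec n X ht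
      exact IH (firstIdx n X t - 1) (by omega) g g' i hi (by omega) (by omega) (by omega)

lemma muhat_top {t i : ℕ} (ht : 1 ≤ t) (hi : firstIdx n X t ≤ i) :
    muhat n X t i = pooledMean n X (firstIdx n X t) t := by
  obtain ⟨g, rfl⟩ : ∃ g, t = g + 1 := ⟨t - 1, by omega⟩
  show (if firstIdx n X (g+1) ≤ i then _ else _) = _
  rw [if_pos hi]

lemma muhat_lower {t i : ℕ} (hi : 1 ≤ i) (hlt : i < firstIdx n X t) :
    muhat n X t i = muhat n X (firstIdx n X t - 1) i := by
  have ht : 1 ≤ t := by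
    by_contra h
    have h0 : t = 0 := by omega
    have : firstIdx n X t = 0 := by
      rw [h0]; unfold firstIdx
      convert Nat.sInf_empty
      ext j; simp only [Set.mem_setOf_eq, Set.mem_empty_iff_false, iff_false]
      rintro ⟨a, b, -⟩; omega
    omega
  obtain ⟨g, rfl⟩ : ∃ g, t = g + 1 := ⟨t - 1, by omega⟩
  obtain ⟨h1, h2, _⟩ := firstIdx_spec n X ht
  show (if firstIdx n X (g+1) ≤ i then _ else _) = _
  rw [if_neg (by omega)]
  exact sdmmsaAux_fuel n X _ g _ i hi (by omega) (by omega) (by omega)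
end FI
section Tools
variable (n X Y : ℕ → ℝ)

lemma pw_pos {M i j : ℕ} (hn : ∀ h, 1 ≤ h → h ≤ M → 0 < n h)
    (h1 : 1 ≤ i) (h2 : i ≤ j) (h3 : j ≤ M) : 0 < pooledWeight n i j := by
  apply Finset.sum_pos
  · intro h hh; rw [Finset.mem_Icc] at hh; exact hn h (by omega) (by omega)
  · exact ⟨i, by simp [Finset.mem_Icc]; omega⟩

lemma sum_const_block {i j : ℕ} (c : ℝ) (hc : ∀ h, i ≤ h → h ≤ j → X h = c) :
    ∑ h ∈ Finset.Icc i j, n h * X h = pooledWeight n i j * c := by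
  unfold pooledWeight
  rw [Finset.sum_mul]
  apply Finset.sum_congr rfl
  intro h hh; rw [Finset.mem_Icc] at hh; rw [hc h hh.1 hh.2]

lemma pm_const {M i j : ℕ} (hn : ∀ h, 1 ≤ h → h ≤ M → 0 < n h)
    (h1 : 1 ≤ i) (h2 : i ≤ j) (h3 : j ≤ M) (c : ℝ)
    (hc : ∀ h, i ≤ h → h ≤ j → X h = c) : pooledMean n X i j = c := by
  unfold pooledMean
  rw [sum_const_block n X c hc, mul_comm,
    mul_div_assoc, div_self (pw_pos n hn h1 h2 h3).ne', mul_one]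

lemma pm_split {i k j : ℕ} (h1 : i ≤ k) (h2 : k < j) :
    pooledMean n X i j = ((∑ h ∈ Finset.Icc i k, n h * X h) + ∑ h ∈ Finset.Icc (k+1) j, n h * X h)
      / (pooledWeight n i k + pooledWeight n (k+1) j) := by
  unfold pooledMean pooledWeight
  rw [Icc_sum_split (fun h => n h * X h) h1 h2, Icc_sum_split n h1 h2]
end Tools

lemma claimC (n Y : ℕ → ℝ) :
    ∀ t', 1 ≤ t' → (∀ h, 1 ≤ h → h ≤ t' → 0 < n h) → ∀ c : ℝ,
    (∀ j, 1 ≤ j → j ≤ t' → pooledMean n Y j t' < c) →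
    ∀ j, 1 ≤ j → j ≤ t' →
      (∑ h ∈ Finset.Icc j t', n h * muhat n Y t' h) / pooledWeight n j t' < c := by
  intro t'
  induction t' using Nat.strong_induction_on with
  | _ t' IH =>
    intro ht' hn c hlt j hj1 hj2
    obtain ⟨ha1, ha2, hamax⟩ := firstIdx_spec n Y ht'
    by_cases hja : firstIdx n Y t' ≤ j
    · have hconst : ∀ h, j ≤ h → h ≤ t' → muhat n Y t' h = pooledMean n Y (firstIdx n Y t') t' :=
        fun h hh1 hh2 => muhat_top n Y ht' (by omega)
      rw [sum_const_block n _ _ hconst, mul_comm, mul_div_assoc,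
        div_self (pw_pos n hn hj1 hj2 le_rfl).ne', mul_one]
      exact hlt _ ha1 ha2
    · push_neg at hja
      obtain ⟨b, hb⟩ : ∃ b, firstIdx n Y t' = b + 1 := ⟨firstIdx n Y t' - 1, by omega⟩
      have hjb : j ≤ b := by omega
      have hbt : b < t' := by omega
      have hsum1 : ∑ h ∈ Finset.Icc j t', n h * muhat n Y t' h
          = (∑ h ∈ Finset.Icc j b, n h * muhat n Y b h)
            + ∑ h ∈ Finset.Icc (b+1) t', n h * muhat n Y t' h := by
        rw [Icc_sum_split (fun h => n h * muhat n Y t' h) hjb hbt]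
        congr 1
        apply Finset.sum_congr rfl
        intro h hh; rw [Finset.mem_Icc] at hh
        rw [muhat_lower n Y (by omega) (by omega), hb, Nat.add_sub_cancel]
      have hNsplit : pooledWeight n j t' = pooledWeight n j b + pooledWeight n (b+1) t' := by
        unfold pooledWeight; exact Icc_sum_split n hjb hbt
      rw [hsum1, hNsplit]
      have hYab : pooledMean n Y (b+1) t' < c := by rw [← hb]; exact hlt _ ha1 ha2
      have hleft : (∑ h ∈ Finset.Icc j b, n h * muhat n Y b h) / pooledWeight n j b < c := by
        apply IH b hbt (by omega) (fun h h1 h2 => hn h h1 (by omega)) c _ j hj1 hjb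
        intro j' hj'1 hj'2
        have h1 : pooledMean n Y j' t' < pooledMean n Y (firstIdx n Y t') t' :=
          pm_lt_of_lt_firstIdx n Y hj'1 (by omega) (by omega)
        rw [hb] at h1
        rw [pm_split n Y (i := j') (k := b) (j := t') hj'2 hbt] at h1
        have h3 : pooledMean n Y (b+1) t' = (∑ h ∈ Finset.Icc (b+1) t', n h * Y h)
            / pooledWeight n (b+1) t' := rfl
        have := A3 (pw_pos n hn hj'1 hj'2 (by omega))
          (pw_pos n hn (i := b+1) (by omega) (by omega) le_rfl)
          (by rw [h3] at h1; exact h1) h3.le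
        calc pooledMean n Y j' b < pooledMean n Y (b+1) t' := this
          _ < c := hYab
      have hright : (∑ h ∈ Finset.Icc (b+1) t', n h * muhat n Y t' h)
          / pooledWeight n (b+1) t' ≤ c := by
        have hconst : ∀ h, b+1 ≤ h → h ≤ t' → muhat n Y t' h = pooledMean n Y (b+1) t' := by
          intro h hh1 hh2
          rw [← hb]; exact muhat_top n Y ht' (by omega)
        rw [sum_const_block n _ _ hconst, mul_comm, mul_div_assoc,
          div_self (pw_pos n hn (i := b+1) (by omega) (by omega) le_rfl).ne', mul_one]
        exact hYab.le
      exact A2 (pw_pos n hn hj1 hjb (by omega)) (pw_pos n hn (i := b+1) (by omega) (by omega) le_rfl) hleft hright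
lemma lemmaP (n Y : ℕ → ℝ) :
    ∀ t, 1 ≤ t → (∀ h, 1 ≤ h → h ≤ t → 0 < n h) →
    ∀ W : ℕ → ℝ, (∀ h, 1 ≤ h → h ≤ t → W h = muhat n Y t h) →
    ∀ i, 1 ≤ i → i ≤ t → muhat n Y t i = muhat n W t i := by
  intro t
  induction t using Nat.strong_induction_on with
  | _ t IH =>
    intro ht hn W HW i hi1 hi2
    obtain ⟨ha1, ha2, hamax⟩ := firstIdx_spec n Y ht
    obtain ⟨b, hb⟩ : ∃ b, firstIdx n Y t = b + 1 := ⟨firstIdx n Y t - 1, by omega⟩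
    rw [hb] at ha2 hamax
    have hWc : ∀ h, b+1 ≤ h → h ≤ t → W h = pooledMean n Y (b+1) t := by
      intro h h1 h2
      rw [HW h (by omega) h2, muhat_top n Y ht (by rw [hb]; omega), hb]
    have hup : ∀ j, b+1 ≤ j → j ≤ t → pooledMean n W j t = pooledMean n Y (b+1) t := by
      intro j h1 h2
      exact pm_const n W hn (by omega) h2 le_rfl _ (fun h hh1 hh2 => hWc h (by omega) hh2)
    have hdown : ∀ j, 1 ≤ j → j < b+1 → pooledMean n W j t < pooledMean n Y (b+1) t := by
      intro j h1 h2
      have hjb : j ≤ b := by omega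
      have hbt : b < t := by omega
      rw [pm_split n W hjb hbt]
      have hleft : (∑ h ∈ Finset.Icc j b, n h * W h) / pooledWeight n j b
          < pooledMean n Y (b+1) t := by
        have hsc : ∑ h ∈ Finset.Icc j b, n h * W h
            = ∑ h ∈ Finset.Icc j b, n h * muhat n Y b h := by
          apply Finset.sum_congr rfl; intro h hh; rw [Finset.mem_Icc] at hh
          rw [HW h (by omega) (by omega), muhat_lower n Y (by omega) (by omega), hb,
            Nat.add_sub_cancel]
        rw [hsc]
        apply claimC n Y b (by omega) (fun h h1 h2 => hn h h1 (by omega)) _ _ j h1 hjb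
        intro j' hj'1 hj'2
        have hlt1 : pooledMean n Y j' t < pooledMean n Y (firstIdx n Y t) t :=
          pm_lt_of_lt_firstIdx n Y hj'1 (by omega) (by omega)
        rw [hb] at hlt1
        rw [pm_split n Y hj'2 hbt] at hlt1
        have h3 : pooledMean n Y (b+1) t = (∑ h ∈ Finset.Icc (b+1) t, n h * Y h)
            / pooledWeight n (b+1) t := rfl
        exact A3 (pw_pos n hn hj'1 hj'2 (by omega))
          (pw_pos n hn (i := b+1) (by omega) (by omega) le_rfl)
          (by rw [h3] at hlt1; exact hlt1) h3.le
      have hright : (∑ h ∈ Finset.Icc (b+1) t, n h * W h) / pooledWeight n (b+1) t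
          ≤ pooledMean n Y (b+1) t := by
        rw [sum_const_block n W _ hWc, mul_comm, mul_div_assoc,
          div_self (pw_pos n hn (i := b+1) (by omega) (by omega) le_rfl).ne', mul_one]
      exact A2 (pw_pos n hn h1 hjb (by omega))
        (pw_pos n hn (i := b+1) (by omega) (by omega) le_rfl) hleft hright
    have hfiW : firstIdx n W t = b + 1 := by
      apply firstIdx_eq_of n W (by omega) ha2
      · intro j h1 h2
        rcases le_or_gt (b+1) j with h | h
        · rw [hup j h h2, hup (b+1) le_rfl ha2]
        · rw [hup (b+1) le_rfl ha2]; exact (hdown j h1 h).le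
      · intro j h1 h2
        rw [hup (b+1) le_rfl ha2]; exact hdown j h1 h2
    rcases le_or_gt (b+1) i with hcase | hcase
    · rw [muhat_top n Y ht (by rw [hb]; omega), muhat_top n W ht (by rw [hfiW]; omega),
        hb, hfiW, hup (b+1) le_rfl ha2]
    · have hib : i ≤ b := by omega
      have hb1 : 1 ≤ b := by omega
      rw [muhat_lower n Y hi1 (by rw [hb]; omega), hb, Nat.add_sub_cancel,
        muhat_lower n W hi1 (by rw [hfiW]; omega), hfiW, Nat.add_sub_cancel]
      apply IH b (by omega) hb1 (fun h h1 h2 => hn h h1 (by omega)) W _ i hi1 hib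
      intro h h1 h2
      rw [HW h h1 (by omega), muhat_lower n Y h1 (by rw [hb]; omega), hb, Nat.add_sub_cancel]
lemma pw_le (n : ℕ → ℝ) {M a j t : ℕ} (hn : ∀ h, 1 ≤ h → h ≤ M → 0 < n h)
    (h1 : 1 ≤ a) (h2 : a ≤ j) (h3 : j ≤ t) (h4 : t ≤ M) :
    pooledWeight n j t ≤ pooledWeight n a t := by
  rcases eq_or_lt_of_le h2 with rfl | hlt
  · exact le_rfl
  · have hsplit : pooledWeight n a t = pooledWeight n a (j-1) + pooledWeight n j t := by
      unfold pooledWeight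
      rw [Icc_sum_split n (i := a) (k := j-1) (j := t) (by omega) (by omega)]
      have hj : j - 1 + 1 = j := by omega
      rw [hj]
    have := pw_pos n hn h1 (j := j - 1) (by omega) (by omega)
    linarith

lemma lemmaEF (m : ℕ) (n Y : ℕ → ℝ) (hn : ∀ h, 1 ≤ h → h ≤ m + 1 → 0 < n h)
    (istar : ℕ) (c : ℝ) (hi1 : 1 ≤ istar)
    (G1 : ∀ j, 1 ≤ j → j ≤ m+1 → pooledMean n Y j (m+1) ≤ c)
    (G2 : ∀ j, 1 ≤ j → j < istar → pooledMean n Y j (m+1) < c)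
    (G3 : pooledMean n Y istar (m+1) = c) :
    ∀ t₀, istar ≤ t₀ → t₀ ≤ m →
      ((∑ h ∈ Finset.Icc istar t₀, n h * muhat n Y t₀ h) = ∑ h ∈ Finset.Icc istar t₀, n h * Y h)
      ∧ (∀ h, 1 ≤ h → h < istar → muhat n Y t₀ h = muhat n Y (istar - 1) h)
      ∧ (∀ j, istar ≤ j → j ≤ t₀ →
          ((∑ h ∈ Finset.Icc j t₀, n h * muhat n Y t₀ h)
              + ∑ h ∈ Finset.Icc (t₀+1) (m+1), n h * Y h)
            / (pooledWeight n j t₀ + pooledWeight n (t₀+1) (m+1)) ≤ c) := by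
  intro t₀
  induction t₀ using Nat.strong_induction_on with
  | _ t₀ IH =>
    intro hit₀ ht₀m
    have ht₀1 : 1 ≤ t₀ := by omega
    obtain ⟨ha1, ha2, hamax⟩ := firstIdx_spec n Y ht₀1
    obtain ⟨b, hb⟩ : ∃ b, firstIdx n Y t₀ = b + 1 := ⟨firstIdx n Y t₀ - 1, by omega⟩
    rw [hb] at ha2 hamax
    have hN2pos : 0 < pooledWeight n (t₀+1) (m+1) :=
      pw_pos n hn (by omega) (by omega) le_rfl
    have hvc : (∑ h ∈ Finset.Icc (t₀+1) (m+1), n h * Y h) / pooledWeight n (t₀+1) (m+1) ≤ c :=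
      G1 (t₀+1) (by omega) (by omega)
    -- the constant value on the top block
    have hconstu : ∀ h, b+1 ≤ h → h ≤ t₀ → muhat n Y t₀ h = pooledMean n Y (b+1) t₀ := by
      intro h h1 h2
      rw [muhat_top n Y ht₀1 (by rw [hb]; omega), hb]
    -- top-block suffix bound (works for any j in the top block)
    have hφtop : ∀ j, b+1 ≤ j → j ≤ t₀ →
        ((∑ h ∈ Finset.Icc j t₀, n h * muhat n Y t₀ h)
            + ∑ h ∈ Finset.Icc (t₀+1) (m+1), n h * Y h)
          / (pooledWeight n j t₀ + pooledWeight n (t₀+1) (m+1)) ≤ c := by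
      intro j hj1 hj2
      have hNj : 0 < pooledWeight n j t₀ := pw_pos n hn (by omega) hj2 (by omega)
      have hNa : 0 < pooledWeight n (b+1) t₀ := pw_pos n hn (by omega) ha2 (by omega)
      rw [sum_const_block n _ _ (fun h p q => hconstu h (by omega) q)]
      have hmean_a : (pooledWeight n (b+1) t₀ * pooledMean n Y (b+1) t₀
            + ∑ h ∈ Finset.Icc (t₀+1) (m+1), n h * Y h)
          / (pooledWeight n (b+1) t₀ + pooledWeight n (t₀+1) (m+1))
          = pooledMean n Y (b+1) (m+1) := by
        rw [pm_split n Y (i := b+1) (k := t₀) (j := m+1) ha2 (by omega)]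
        congr 2
        unfold pooledMean
        rw [mul_comm, div_mul_cancel₀ _ hNa.ne']
      rcases le_or_gt (pooledMean n Y (b+1) t₀) c with hu | hu
      · apply A1 hNj hN2pos _ hvc
        rw [mul_comm, mul_div_assoc, div_self hNj.ne', mul_one]
        exact hu
      · have hA5 := A5 (u := pooledMean n Y (b+1) t₀)
          (S2 := ∑ h ∈ Finset.Icc (t₀+1) (m+1), n h * Y h)
          hNj (pw_le n hn (by omega) hj1 hj2 (by omega)) hN2pos (by linarith)
        calc _ ≤ _ := hA5
          _ = pooledMean n Y (b+1) (m+1) := hmean_a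
          _ ≤ c := G1 (b+1) (by omega) (by omega)
    rcases le_or_gt (b+1) istar with hcase | hcase
    · -- istar ≤ b+1 : show b+1 = istar
      have hieq : b + 1 = istar := by
        by_contra hne
        have hblt : b + 1 < istar := by omega
        obtain ⟨s, hs⟩ : ∃ s, istar = s + 1 := ⟨istar - 1, by omega⟩
        -- step 1 : pooledMean n Y (b+1) s < c
        have hstep1 : pooledMean n Y (b+1) s < c := by
          have hg2 : pooledMean n Y (b+1) (m+1) < c := G2 (b+1) (by omega) hblt
          rw [pm_split n Y (i := b+1) (k := s) (j := m+1) (by omega) (by omega)] at hg2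
          have h3 : pooledMean n Y (s+1) (m+1) = (∑ h ∈ Finset.Icc (s+1) (m+1), n h * Y h)
              / pooledWeight n (s+1) (m+1) := rfl
          have h4 : c ≤ (∑ h ∈ Finset.Icc (s+1) (m+1), n h * Y h)
              / pooledWeight n (s+1) (m+1) := le_of_eq (by rw [← h3, ← hs, G3])
          exact A3 (pw_pos n hn (by omega) (j := s) (by omega) (by omega))
            (pw_pos n hn (i := s+1) (by omega) (by omega) le_rfl) hg2 h4
        -- step 2 : pooledMean n Y istar t₀ ≤ pooledMean n Y (b+1) t₀
        have hstep2 : pooledMean n Y istar t₀ ≤ pooledMean n Y (b+1) t₀ :=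
          hamax istar hi1 hit₀
        -- step 3 : pooledMean n Y (b+1) t₀ ≤ pooledMean n Y (b+1) s
        have hstep3 : pooledMean n Y (b+1) t₀ ≤ pooledMean n Y (b+1) s := by
          have hsp : pooledMean n Y (b+1) t₀
              = ((∑ h ∈ Finset.Icc (b+1) s, n h * Y h) + ∑ h ∈ Finset.Icc (s+1) t₀, n h * Y h)
                / (pooledWeight n (b+1) s + pooledWeight n (s+1) t₀) :=
            pm_split n Y (by omega) (by omega)
          have h2' : (∑ h ∈ Finset.Icc (s+1) t₀, n h * Y h) / pooledWeight n (s+1) t₀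
              ≤ pooledMean n Y (b+1) t₀ := by
            have : pooledMean n Y (s+1) t₀ ≤ pooledMean n Y (b+1) t₀ := by
              rw [← hs]; exact hstep2
            exact this
          exact A6 (pw_pos n hn (by omega) (j := s) (by omega) (by omega))
            (pw_pos n hn (i := s+1) (by omega) (j := t₀) (by omega) (by omega))
            hsp.symm h2'
        -- step 4 : contradiction with G1 at t₀+1
        have hlt_c : pooledMean n Y istar t₀ < c := by linarith
        have hspl : pooledMean n Y istar (m+1)
            = ((∑ h ∈ Finset.Icc istar t₀, n h * Y h)
                + ∑ h ∈ Finset.Icc (t₀+1) (m+1), n h * Y h)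
              / (pooledWeight n istar t₀ + pooledWeight n (t₀+1) (m+1)) :=
          pm_split n Y hit₀ (by omega)
        have := A3' (pw_pos n hn hi1 hit₀ (by omega)) hN2pos
          (by rw [← hspl, G3]) hlt_c
        exact absurd hvc (not_le.2 this)
      -- now b+1 = istar
      refine ⟨?_, ?_, ?_⟩
      · rw [sum_const_block n _ _ (fun h p q => hconstu h (by omega) q), hieq]
        unfold pooledMean
        rw [mul_comm, div_mul_cancel₀ _ (pw_pos n hn hi1 hit₀ (by omega)).ne']
      · intro h h1 h2
        rw [muhat_lower n Y h1 (by rw [hb]; omega), hb, Nat.add_sub_cancel,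
          (by omega : istar - 1 = b)]
      · intro j hj1 hj2
        exact hφtop j (by omega) hj2
    · -- istar ≤ b : use IH at b
      have hsb : istar ≤ b := by omega
      obtain ⟨ihβ, ihγ, ihφ⟩ := IH b (by omega) hsb (by omega)
      have hlow : ∀ h, 1 ≤ h → h ≤ b → muhat n Y t₀ h = muhat n Y b h := by
        intro h h1 h2
        rw [muhat_lower n Y h1 (by rw [hb]; omega), hb, Nat.add_sub_cancel]
      have hbm1 : pooledWeight n (b+1) t₀ + pooledWeight n (t₀+1) (m+1)
          = pooledWeight n (b+1) (m+1) := by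
        unfold pooledWeight
        rw [Icc_sum_split n (i := b+1) (k := t₀) (j := m+1) (by omega) (by omega)]
      have hbs1 : (∑ h ∈ Finset.Icc (b+1) t₀, n h * muhat n Y t₀ h)
          = ∑ h ∈ Finset.Icc (b+1) t₀, n h * Y h := by
        rw [sum_const_block n _ _ (fun h p q => hconstu h p q)]
        unfold pooledMean
        rw [mul_comm, div_mul_cancel₀ _ (pw_pos n hn (by omega) ha2 (by omega)).ne']
      have hA : (∑ h ∈ Finset.Icc istar b, n h * muhat n Y t₀ h)
          = ∑ h ∈ Finset.Icc istar b, n h * muhat n Y b h :=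
        Finset.sum_congr rfl (fun h hh => by
          rw [Finset.mem_Icc] at hh; rw [hlow h (by omega) hh.2])
      refine ⟨?_, ?_, ?_⟩
      · rw [Icc_sum_split (fun h => n h * muhat n Y t₀ h) (i := istar) (k := b) (j := t₀)
            hsb (by omega),
          Icc_sum_split (fun h => n h * Y h) (i := istar) (k := b) (j := t₀) hsb (by omega),
          hA, ihβ, hbs1]
      · intro h h1 h2
        rw [hlow h h1 (by omega)]
        exact ihγ h h1 h2
      · intro j hj1 hj2
        rcases le_or_gt (b+1) j with hj | hj
        · exact hφtop j hj hj2
        · -- j ≤ b : reduce to IH φ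
          have hjb : j ≤ b := by omega
          have key := ihφ j hj1 hjb
          have e1 : (∑ h ∈ Finset.Icc j t₀, n h * muhat n Y t₀ h)
                + ∑ h ∈ Finset.Icc (t₀+1) (m+1), n h * Y h
              = (∑ h ∈ Finset.Icc j b, n h * muhat n Y b h)
                + ∑ h ∈ Finset.Icc (b+1) (m+1), n h * Y h := by
            rw [Icc_sum_split (fun h => n h * muhat n Y t₀ h) (i := j) (k := b) (j := t₀)
                hjb (by omega), hbs1,
              Icc_sum_split (fun h => n h * Y h) (i := b+1) (k := t₀) (j := m+1)
                (by omega) (by omega)]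
            have hB : (∑ h ∈ Finset.Icc j b, n h * muhat n Y t₀ h)
                = ∑ h ∈ Finset.Icc j b, n h * muhat n Y b h :=
              Finset.sum_congr rfl (fun h hh => by
                rw [Finset.mem_Icc] at hh; rw [hlow h (by omega) hh.2])
            rw [hB]; ring
          have e2 : pooledWeight n j t₀ + pooledWeight n (t₀+1) (m+1)
              = pooledWeight n j b + pooledWeight n (b+1) (m+1) := by
            unfold pooledWeight
            rw [Icc_sum_split n (i := j) (k := b) (j := t₀) hjb (by omega),
              Icc_sum_split n (i := b+1) (k := t₀) (j := m+1) (by omega) (by omega)]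
            ring
          rw [e1, e2]
          exact key

/-- eq. (2.23): recursive structure of the SDMMSA: the SDMMSA estimate from
`m+1` data points is unchanged when the first `m` data values are replaced by their
`m`-point SDMMSA estimates. -/
theorem sdmmsa_recursive_structure (m : ℕ) (hm : 1 ≤ m) (n Y : ℕ → ℝ)
    (hn : ∀ h, 1 ≤ h → h ≤ m + 1 → 0 < n h) :
    ∀ i, 1 ≤ i → i ≤ m + 1 →
      muhat n Y (m + 1) i =
        muhat n (fun t => if 1 ≤ t ∧ t ≤ m then muhat n Y m t else Y t) (m + 1) i := by
  set W : ℕ → ℝ := fun t => if 1 ≤ t ∧ t ≤ m then muhat n Y m t else Y t with hWdef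
  have HW1 : ∀ h, 1 ≤ h → h ≤ m → W h = muhat n Y m h := by
    intro h h1 h2; show (if 1 ≤ h ∧ h ≤ m then _ else _) = _; rw [if_pos ⟨h1, h2⟩]
  have HW2 : W (m+1) = Y (m+1) := by
    show (if 1 ≤ m+1 ∧ m+1 ≤ m then _ else _) = _; rw [if_neg (by omega)]
  intro i hi1 hi2
  have ht : 1 ≤ m + 1 := by omega
  obtain ⟨hI1, hI2, hImax⟩ := firstIdx_spec n Y ht
  obtain ⟨s, hs⟩ : ∃ s, firstIdx n Y (m+1) = s + 1 := ⟨firstIdx n Y (m+1) - 1, by omega⟩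
  rw [hs] at hI2 hImax
  have G2 : ∀ j, 1 ≤ j → j < s+1 → pooledMean n Y j (m+1) < pooledMean n Y (s+1) (m+1) := by
    intro j h1 h2
    have := pm_lt_of_lt_firstIdx n Y h1 (by omega) (by omega : j < firstIdx n Y (m+1))
    rwa [hs] at this
  have hsing : ∀ (X : ℕ → ℝ), (∑ h ∈ Finset.Icc (m+1) (m+1), n h * X h) = n (m+1) * X (m+1) := by
    intro X; rw [Finset.Icc_self, Finset.sum_singleton]
  have hpm_end : pooledMean n W (m+1) (m+1) = pooledMean n Y (m+1) (m+1) := by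
    unfold pooledMean; rw [hsing W, hsing Y, HW2]
  -- key facts, proved in each case
  have main : (∑ h ∈ Finset.Icc (s+1) (m+1), n h * W h)
        = (∑ h ∈ Finset.Icc (s+1) (m+1), n h * Y h)
      ∧ (∀ j, 1 ≤ j → j ≤ m+1 → pooledMean n W j (m+1) ≤ pooledMean n Y (s+1) (m+1))
      ∧ (∀ j, 1 ≤ j → j < s+1 → pooledMean n W j (m+1) < pooledMean n Y (s+1) (m+1))
      ∧ (∀ h, 1 ≤ h → h ≤ s → W h = muhat n Y s h) := by
    rcases le_or_gt (s+1) m with hsm | hsm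
    · -- s+1 ≤ m : use lemmaEF at t₀ = m
      obtain ⟨β, γm, φ⟩ := lemmaEF m n Y hn (s+1) (pooledMean n Y (s+1) (m+1)) (by omega)
        hImax G2 rfl m hsm le_rfl
      have hWsum : ∀ j, 1 ≤ j → j ≤ m → (∑ h ∈ Finset.Icc j m, n h * W h)
          = ∑ h ∈ Finset.Icc j m, n h * muhat n Y m h := by
        intro j h1 h2
        exact Finset.sum_congr rfl (fun h hh => by
          rw [Finset.mem_Icc] at hh; rw [HW1 h (by omega) hh.2])
      have hsplitW : ∀ j, 1 ≤ j → j ≤ m → pooledMean n W j (m+1)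
          = ((∑ h ∈ Finset.Icc j m, n h * muhat n Y m h)
              + ∑ h ∈ Finset.Icc (m+1) (m+1), n h * Y h)
            / (pooledWeight n j m + pooledWeight n (m+1) (m+1)) := by
        intro j h1 h2
        rw [pm_split n W (i := j) (k := m) (j := m+1) h2 (by omega), hWsum j h1 h2,
          hsing W, hsing Y, HW2]
      have hβW : (∑ h ∈ Finset.Icc (s+1) (m+1), n h * W h)
          = ∑ h ∈ Finset.Icc (s+1) (m+1), n h * Y h := by
        rw [Icc_sum_split (fun h => n h * W h) (i := s+1) (k := m) (j := m+1) hsm (by omega),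
          Icc_sum_split (fun h => n h * Y h) (i := s+1) (k := m) (j := m+1) hsm (by omega),
          hWsum (s+1) (by omega) hsm, β, hsing W, hsing Y, HW2]
      have hpmI : pooledMean n W (s+1) (m+1) = pooledMean n Y (s+1) (m+1) := by
        unfold pooledMean; rw [hβW]
      have hγ : ∀ h, 1 ≤ h → h ≤ s → W h = muhat n Y s h := by
        intro h h1 h2
        rw [HW1 h h1 (by omega)]
        have := γm h h1 (by omega)
        rwa [Nat.add_sub_cancel] at this
      refine ⟨hβW, ?_, ?_, hγ⟩
      · intro j h1 h2
        rcases le_or_gt j m with hjm | hjm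
        · rcases le_or_gt (s+1) j with hj | hj
          · rw [hsplitW j h1 hjm]
            exact φ j hj hjm
          · -- j < s+1 : strict, proved below; here just ≤ via the same bound
            rw [hsplitW j h1 hjm]
            -- left piece < c via claimC, right piece = c
            have hleft : (∑ h ∈ Finset.Icc j s, n h * muhat n Y m h)
                / pooledWeight n j s < pooledMean n Y (s+1) (m+1) := by
              have hconv : (∑ h ∈ Finset.Icc j s, n h * muhat n Y m h)
                  = ∑ h ∈ Finset.Icc j s, n h * muhat n Y s h := by
                apply Finset.sum_congr rfl; intro h hh; rw [Finset.mem_Icc] at hh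
                have := γm h (by omega) (by omega)
                rw [Nat.add_sub_cancel] at this
                rw [this]
              rw [hconv]
              apply claimC n Y s (by omega) (fun h a b => hn h a (by omega)) _ _ j h1 (by omega)
              intro j' hj'1 hj'2
              have hg2 : pooledMean n Y j' (m+1) < pooledMean n Y (s+1) (m+1) :=
                G2 j' hj'1 (by omega)
              rw [pm_split n Y (i := j') (k := s) (j := m+1) hj'2 (by omega)] at hg2
              exact A3 (pw_pos n hn hj'1 hj'2 (by omega))
                (pw_pos n hn (i := s+1) (by omega) (by omega) le_rfl) hg2 le_rfl
            have e3 : (∑ h ∈ Finset.Icc j m, n h * muhat n Y m h)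
                  + ∑ h ∈ Finset.Icc (m+1) (m+1), n h * Y h
                = (∑ h ∈ Finset.Icc j s, n h * muhat n Y m h)
                  + ∑ h ∈ Finset.Icc (s+1) (m+1), n h * Y h := by
              rw [Icc_sum_split (fun h => n h * muhat n Y m h) (i := j) (k := s) (j := m)
                  (by omega) (by omega),
                Icc_sum_split (fun h => n h * Y h) (i := s+1) (k := m) (j := m+1)
                  hsm (by omega), ← β]
              ring
            have e4 : pooledWeight n j m + pooledWeight n (m+1) (m+1)
                = pooledWeight n j s + pooledWeight n (s+1) (m+1) := by
              unfold pooledWeight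
              rw [Icc_sum_split n (i := j) (k := s) (j := m) (by omega) (by omega),
                Icc_sum_split n (i := s+1) (k := m) (j := m+1) hsm (by omega)]
              ring
            rw [e3, e4]
            have h5 : (∑ h ∈ Finset.Icc (s+1) (m+1), n h * Y h)
                / pooledWeight n (s+1) (m+1) ≤ pooledMean n Y (s+1) (m+1) := le_rfl
            exact (A2 (pw_pos n hn h1 (by omega) (by omega))
              (pw_pos n hn (i := s+1) (by omega) (by omega) le_rfl) hleft h5).le
        · -- j = m+1
          have : j = m+1 := by omega
          rw [this, hpm_end]
          exact hImax (m+1) (by omega) le_rfl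
      · intro j h1 h2
        have hjm : j ≤ m := by omega
        rw [hsplitW j h1 hjm]
        have hleft : (∑ h ∈ Finset.Icc j s, n h * muhat n Y m h)
            / pooledWeight n j s < pooledMean n Y (s+1) (m+1) := by
          have hconv : (∑ h ∈ Finset.Icc j s, n h * muhat n Y m h)
              = ∑ h ∈ Finset.Icc j s, n h * muhat n Y s h := by
            apply Finset.sum_congr rfl; intro h hh; rw [Finset.mem_Icc] at hh
            have := γm h (by omega) (by omega)
            rw [Nat.add_sub_cancel] at this
            rw [this]
          rw [hconv]
          apply claimC n Y s (by omega) (fun h a b => hn h a (by omega)) _ _ j h1 (by omega)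
          intro j' hj'1 hj'2
          have hg2 : pooledMean n Y j' (m+1) < pooledMean n Y (s+1) (m+1) :=
            G2 j' hj'1 (by omega)
          rw [pm_split n Y (i := j') (k := s) (j := m+1) hj'2 (by omega)] at hg2
          exact A3 (pw_pos n hn hj'1 hj'2 (by omega))
            (pw_pos n hn (i := s+1) (by omega) (by omega) le_rfl) hg2 le_rfl
        have e3 : (∑ h ∈ Finset.Icc j m, n h * muhat n Y m h)
              + ∑ h ∈ Finset.Icc (m+1) (m+1), n h * Y h
            = (∑ h ∈ Finset.Icc j s, n h * muhat n Y m h)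
              + ∑ h ∈ Finset.Icc (s+1) (m+1), n h * Y h := by
          rw [Icc_sum_split (fun h => n h * muhat n Y m h) (i := j) (k := s) (j := m)
              (by omega) (by omega),
            Icc_sum_split (fun h => n h * Y h) (i := s+1) (k := m) (j := m+1)
              hsm (by omega), ← β]
          ring
        have e4 : pooledWeight n j m + pooledWeight n (m+1) (m+1)
            = pooledWeight n j s + pooledWeight n (s+1) (m+1) := by
          unfold pooledWeight
          rw [Icc_sum_split n (i := j) (k := s) (j := m) (by omega) (by omega),
            Icc_sum_split n (i := s+1) (k := m) (j := m+1) hsm (by omega)]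
          ring
        rw [e3, e4]
        exact A2 (pw_pos n hn h1 (by omega) (by omega))
          (pw_pos n hn (i := s+1) (by omega) (by omega) le_rfl) hleft le_rfl
    · -- s+1 = m+1, i.e. s = m
      have hsm' : s = m := by omega
      have hβW : (∑ h ∈ Finset.Icc (s+1) (m+1), n h * W h)
          = ∑ h ∈ Finset.Icc (s+1) (m+1), n h * Y h := by
        rw [hsm', hsing W, hsing Y, HW2]
      have hγ : ∀ h, 1 ≤ h → h ≤ s → W h = muhat n Y s h := by
        intro h h1 h2; rw [hsm'] at h2 ⊢; exact HW1 h h1 h2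
      have hdown : ∀ j, 1 ≤ j → j < s+1 → pooledMean n W j (m+1)
          < pooledMean n Y (s+1) (m+1) := by
        intro j h1 h2
        have hjm : j ≤ m := by omega
        rw [pm_split n W (i := j) (k := m) (j := m+1) hjm (by omega)]
        have hWsum : (∑ h ∈ Finset.Icc j m, n h * W h)
            = ∑ h ∈ Finset.Icc j m, n h * muhat n Y m h :=
          Finset.sum_congr rfl (fun h hh => by
            rw [Finset.mem_Icc] at hh; rw [HW1 h (by omega) hh.2])
        have hleft : (∑ h ∈ Finset.Icc j m, n h * W h) / pooledWeight n j m
            < pooledMean n Y (s+1) (m+1) := by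
          rw [hWsum]
          apply claimC n Y m hm (fun h a b => hn h a (by omega)) _ _ j h1 hjm
          intro j' hj'1 hj'2
          have hg2 : pooledMean n Y j' (m+1) < pooledMean n Y (s+1) (m+1) :=
            G2 j' hj'1 (by omega)
          rw [pm_split n Y (i := j') (k := m) (j := m+1) hj'2 (by omega)] at hg2
          exact A3 (pw_pos n hn hj'1 hj'2 (by omega))
            (pw_pos n hn (i := m+1) (by omega) (by omega) le_rfl) hg2
            (le_of_eq (by rw [hsm']; rfl))
        have hright : (∑ h ∈ Finset.Icc (m+1) (m+1), n h * W h)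
            / pooledWeight n (m+1) (m+1) ≤ pooledMean n Y (s+1) (m+1) := by
          rw [hsing W, HW2, ← hsing Y, hsm']
          exact le_rfl
        exact A2 (pw_pos n hn h1 hjm (by omega))
          (pw_pos n hn (i := m+1) (by omega) (by omega) le_rfl) hleft hright
      refine ⟨hβW, ?_, hdown, hγ⟩
      intro j h1 h2
      rcases le_or_gt (s+1) j with hj | hj
      · have : j = s+1 := by omega
        rw [this]
        exact le_of_eq (by unfold pooledMean; rw [hβW])
      · exact (hdown j h1 hj).le
  obtain ⟨hβW, hup, hdown, hγ⟩ := main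
  have hpmI : pooledMean n W (s+1) (m+1) = pooledMean n Y (s+1) (m+1) := by
    unfold pooledMean; rw [hβW]
  have hfiW : firstIdx n W (m+1) = s+1 := by
    apply firstIdx_eq_of n W (by omega) hI2
    · intro j h1 h2; rw [hpmI]; exact hup j h1 h2
    · intro j h1 h2; rw [hpmI]; exact hdown j h1 h2
  rcases le_or_gt (s+1) i with hcase | hcase
  · rw [muhat_top n Y ht (by rw [hs]; omega), muhat_top n W ht (by rw [hfiW]; omega),
      hs, hfiW, hpmI]
  · have his : 1 ≤ s := by omega
    rw [muhat_lower n Y hi1 (by rw [hs]; omega), hs, Nat.add_sub_cancel,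
      muhat_lower n W hi1 (by rw [hfiW]; omega), hfiW, Nat.add_sub_cancel]
    exact lemmaP n Y s his (fun h a b => hn h a (by omega)) W hγ i hi1 (by omega)
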